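/- Let n ≥ 3 and m ≥ 3 be integers, let p_0,…,p_n ∈ ℝ^d and r_0,…,r_m ∈ ℝ^d, set P_n(t) := Σ_{i=0}^{n} p_i B_i^n(t) and R_m(t) := Σ_{i=0}^{m} r_i B_i^m(t), and let μ_1, μ_2, μ_3 be real numbers. Suppose the G³ conditions at t = 1 hold: R_m(1) = P_n(1), R_m'(1) = μ_1 P_n'(1), R_m''(1) = μ_1² P_n''(1) + μ_2 P_n'(1), and R_m'''(1) = μ_1³ P_n'''(1) + 3μ_1μ_2 P_n''(1) + μ_3 P_n'(1). Then: r_m = p_n; r_{m-1} = p_n - (n/m)μ_1 Δp_{n-1}; r_{m-2} = p_n - (n/m)[2μ_1 - μ_2/(m-1)] Δp_{n-1} + ((n-1)_2/(m-1)_2) μ_1² Δ²p_{n-2}; and r_{m-3} = p_n - (n/m)[3μ_1 - 3μ_2/(m-1) + μ_3/((m-2)_2)] Δp_{n-1} + 3((n-1)_2/(m-1)_2)[μ_1² - μ_1μ_2/(m-2)] Δ²p_{n-2} - ((n-2)_3/(m-2)_3) μ_1³ Δ³p_{n-3}, where (a)_k denotes the Pochhammer symbol and Δ is the forward difference operator.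 -/

import Mathlib

open MeasureTheory Polynomial

/-- Bernstein polynomial `B_i^n(t) = C(n,i) t^i (1-t)^{n-i}` as a real function. -/
noncomputable def bern (n i : ℕ) (t : ℝ) : ℝ := (n.choose i : ℝ) * t ^ i * (1 - t) ^ (n - i)

/-- Pochhammer symbol `(a)_k = a(a+1)⋯(a+k-1)`. -/
noncomputable def poch (a : ℝ) (k : ℕ) : ℝ := (ascPochhammer ℝ k).eval a

/-- Forward difference operator: `fdiff q k i = Δ^k q_i`. -/
def fdiff {E : Type*} [AddCommGroup E] (q : ℕ → E) : ℕ → ℕ → E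
  | 0, i => q i
  | k + 1, i => fdiff q k (i + 1) - fdiff q k i

lemma poch2 (a : ℝ) : poch a 2 = a * (a+1) := by
  simp [poch, ascPochhammer_succ_eval]
lemma poch3 (a : ℝ) : poch a 3 = a * (a+1) * (a+2) := by
  simp [poch, ascPochhammer_succ_eval]


noncomputable def bpoly (n i : ℕ) : Polynomial ℝ :=
  Polynomial.C (n.choose i : ℝ) * Polynomial.X ^ i * (1 - Polynomial.X) ^ (n - i)

lemma bern_aux (n i : ℕ) (t : ℝ) : (n.choose i : ℝ) * t ^ i * (1 - t) ^ (n - i) = (bpoly n i).eval t := by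
  simp [bpoly]

lemma curve_deriv {E : Type*} [NormedAddCommGroup E] [NormedSpace ℝ E]
    (c : ℕ → ℝ[X]) (p : ℕ → E) (s : Finset ℕ) :
    deriv (fun t : ℝ => ∑ i ∈ s, (c i).eval t • p i) =
      fun t : ℝ => ∑ i ∈ s, ((c i).derivative).eval t • p i := by
  funext t
  exact (HasDerivAt.fun_sum fun i _ => ((c i).hasDerivAt t).smul_const (p i)).deriv

lemma curve_iteratedDeriv {E : Type*} [NormedAddCommGroup E] [NormedSpace ℝ E]
    (k : ℕ) (c : ℕ → ℝ[X]) (p : ℕ → E) (s : Finset ℕ) (t : ℝ) :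
    iteratedDeriv k (fun t : ℝ => ∑ i ∈ s, (c i).eval t • p i) t =
      ∑ i ∈ s, ((derivative^[k] (c i)).eval t) • p i := by
  induction k generalizing c with
  | zero => simp
  | succ k ih =>
    rw [iteratedDeriv_succ', curve_deriv]
    simpa [Function.iterate_succ_apply] using ih (fun i => (c i).derivative)

lemma eval_one_zero (k : ℕ) :
    ∀ (q : ℝ[X]) (j : ℕ), k < j → (derivative^[k] (q * (1 - X) ^ j)).eval 1 = 0 := by
  induction k with
  | zero =>
    intro q j hj
    obtain ⟨j, rfl⟩ := Nat.exists_eq_succ_of_ne_zero (by omega : j ≠ 0)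
    simp [pow_succ]
  | succ k ih =>
    intro q j hj
    obtain ⟨j, rfl⟩ := Nat.exists_eq_succ_of_ne_zero (by omega : j ≠ 0)
    rw [Function.iterate_succ_apply]
    have h : derivative (q * (1 - X) ^ (j + 1)) =
        (derivative q * (1 - X) - ((j : ℝ[X]) + 1) * q) * (1 - X) ^ j := by
      rw [derivative_mul, derivative_pow]
      simp
      ring
    rw [h]
    exact ih _ j (by omega)
lemma bp3 (n' : ℕ) : bpoly (n'+3) (n'+3) = X^(n'+3) := by
  unfold bpoly; simp

lemma bp2 (n' : ℕ) : bpoly (n'+3) (n'+2) = C ((n':ℝ)+3) * (X^(n'+2) - X^(n'+3)) := by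
  unfold bpoly
  have hcs : (n'+3).choose (n'+2) = n'+3 := by
    have := Nat.choose_symm (show 1 ≤ n'+3 by omega)
    rw [show n'+3-1 = n'+2 by omega] at this
    rw [this, Nat.choose_one_right]
  rw [show n'+3 - (n'+2) = 1 by omega, hcs]
  push_cast; ring

lemma bp1 (n' : ℕ) : bpoly (n'+3) (n'+1)
    = C (((n':ℝ)+3)*((n':ℝ)+2)/2) * (X^(n'+1) - 2*X^(n'+2) + X^(n'+3)) := by
  unfold bpoly
  have hcs : (n'+3).choose (n'+1) = (n'+3).choose 2 := by
    have := Nat.choose_symm (show 2 ≤ n'+3 by omega)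
    rw [show n'+3-2 = n'+1 by omega] at this
    exact this
  have hd : (n'+3).descFactorial 2 = (n'+2) * (n'+3) := by
    rw [Nat.descFactorial_succ, Nat.descFactorial_one, show n'+3-1 = n'+2 by omega]
  have h2 : 2 * (n'+3).choose 2 = (n'+2) * (n'+3) := by
    rw [← hd, Nat.descFactorial_eq_factorial_mul_choose]
    norm_num [Nat.factorial]
  have hch : ((n'+3).choose (n'+1) : ℝ) = ((n':ℝ)+3)*((n':ℝ)+2)/2 := by
    rw [hcs]
    have := congrArg (fun x : ℕ => (x : ℝ)) h2
    push_cast at this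
    linarith
  rw [show n'+3 - (n'+1) = 2 by omega, hch]
  push_cast; ring

lemma bp0 (n' : ℕ) : bpoly (n'+3) n'
    = C (((n':ℝ)+3)*((n':ℝ)+2)*((n':ℝ)+1)/6) * (X^n' - 3*X^(n'+1) + 3*X^(n'+2) - X^(n'+3)) := by
  unfold bpoly
  have hcs : (n'+3).choose n' = (n'+3).choose 3 := by
    have := Nat.choose_symm (show 3 ≤ n'+3 by omega)
    rw [show n'+3-3 = n' by omega] at this
    exact this
  have hd : (n'+3).descFactorial 3 = (n'+1) * ((n'+2) * (n'+3)) := by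
    rw [Nat.descFactorial_succ, Nat.descFactorial_succ, Nat.descFactorial_one,
      show n'+3-2 = n'+1 by omega, show n'+3-1 = n'+2 by omega]
  have h2 : 6 * (n'+3).choose 3 = (n'+1) * ((n'+2) * (n'+3)) := by
    rw [← hd, Nat.descFactorial_eq_factorial_mul_choose]
    norm_num [Nat.factorial]
  have hch : ((n'+3).choose n' : ℝ) = ((n':ℝ)+3)*((n':ℝ)+2)*((n':ℝ)+1)/6 := by
    rw [hcs]
    have := congrArg (fun x : ℕ => (x : ℝ)) h2
    push_cast at this
    linarith
  rw [show n'+3 - n' = 3 by omega, hch]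
  push_cast; ring

lemma dc1 (a : ℕ) : ((a.descFactorial 1 : ℕ) : ℝ) = a := by simp

lemma dc2 (a : ℕ) : ((a.descFactorial 2 : ℕ) : ℝ) = a * ((a:ℝ) - 1) := by
  rcases a with _ | a
  · simp
  · rw [Nat.descFactorial_succ, Nat.descFactorial_one, Nat.succ_sub_one]
    push_cast; ring

lemma dc3 (a : ℕ) : ((a.descFactorial 3 : ℕ) : ℝ) = a * ((a:ℝ) - 1) * ((a:ℝ) - 2) := by
  rcases a with _ | _ | a
  · simp
  · simp [Nat.descFactorial_succ]
  · rw [Nat.descFactorial_succ, show a+1+1-2 = a by omega]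
    push_cast [dc2]; ring

variable {E : Type*} [NormedAddCommGroup E] [NormedSpace ℝ E]

lemma curve_tail (k : ℕ) (hk : k < 4) (n' : ℕ) (p : ℕ → E) :
    iteratedDeriv k (fun t : ℝ => ∑ i ∈ Finset.range (n'+4), bern (n'+3) i t • p i) 1
      = (derivative^[k] (bpoly (n'+3) n')).eval 1 • p n'
      + (derivative^[k] (bpoly (n'+3) (n'+1))).eval 1 • p (n'+1)
      + (derivative^[k] (bpoly (n'+3) (n'+2))).eval 1 • p (n'+2)
      + (derivative^[k] (bpoly (n'+3) (n'+3))).eval 1 • p (n'+3) := by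
  have hb : (fun t : ℝ => ∑ i ∈ Finset.range (n'+4), bern (n'+3) i t • p i)
      = fun t : ℝ => ∑ i ∈ Finset.range (n'+4), (bpoly (n'+3) i).eval t • p i := by
    funext t
    refine Finset.sum_congr rfl fun i _ => ?_
    rw [bern, bern_aux]
  rw [hb, curve_iteratedDeriv, Finset.sum_range_succ, Finset.sum_range_succ,
    Finset.sum_range_succ, Finset.sum_range_succ, Finset.sum_eq_zero, zero_add]
  intro i hi
  have hi' : i < n' := Finset.mem_range.mp hi
  have hz : (derivative^[k] (bpoly (n'+3) i)).eval 1 = 0 := by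
    unfold bpoly
    exact eval_one_zero k _ _ (by omega)
  rw [hz, zero_smul]

lemma curve_d0 (n' : ℕ) (p : ℕ → E) :
    (∑ i ∈ Finset.range (n'+4), bern (n'+3) i 1 • p i) = p (n'+3) := by
  have h := curve_tail 0 (by norm_num) n' p (E := E)
  rw [iteratedDeriv_zero] at h
  rw [h, bp0, bp1, bp2, bp3]
  simp only [Function.iterate_zero_apply, eval_mul, eval_sub, eval_add, eval_C, eval_pow,
    eval_X, eval_one, eval_ofNat, one_pow, mul_one]
  match_scalars <;> ring

lemma curve_d1 (n' : ℕ) (p : ℕ → E) :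
    deriv (fun t : ℝ => ∑ i ∈ Finset.range (n'+4), bern (n'+3) i t • p i) 1
      = ((n':ℝ)+3) • fdiff p 1 (n'+2) := by
  have h := curve_tail 1 (by norm_num) n' p
  rw [iteratedDeriv_one] at h
  rw [h, bp0, bp1, bp2, bp3]
  simp only [Function.iterate_one, derivative_mul, derivative_pow, derivative_sub,
    derivative_add, derivative_C, derivative_X_pow, derivative_X, derivative_one,
    derivative_ofNat, eval_mul, eval_sub, eval_add, eval_C, eval_pow, eval_X, eval_one,
    eval_natCast, eval_ofNat, eval_zero, one_pow, mul_one, fdiff]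
  push_cast
  match_scalars <;> ring

lemma it2 (q : ℝ[X]) : (⇑derivative)^[2] q = derivative (derivative q) := rfl
lemma it3 (q : ℝ[X]) : (⇑derivative)^[3] q = derivative (derivative (derivative q)) := rfl

lemma curve_d2 (n' : ℕ) (p : ℕ → E) :
    iteratedDeriv 2 (fun t : ℝ => ∑ i ∈ Finset.range (n'+4), bern (n'+3) i t • p i) 1
      = (((n':ℝ)+3) * ((n':ℝ)+2)) • fdiff p 2 (n'+1) := by
  have h := curve_tail 2 (by norm_num) n' p
  rw [h, bp0, bp1, bp2, bp3]
  rcases n' with _ | a <;>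
  · simp only [it2, derivative_mul, derivative_pow, derivative_sub,
      derivative_add, derivative_C, derivative_X_pow, derivative_X, derivative_one,
      derivative_ofNat, derivative_zero, derivative_natCast, eval_mul, eval_sub, eval_add,
      eval_C, eval_pow, eval_X, eval_one,
      eval_natCast, eval_ofNat, eval_zero, one_pow, mul_one, mul_zero, zero_mul,
      Nat.zero_sub, Nat.add_sub_cancel, fdiff]
    first
    | (simp only [show ∀ a : ℕ, a+1+1-1 = a+1 from fun a => rfl, show ∀ a : ℕ, a+1-1 = a from fun a => rfl]
       push_cast
       match_scalars <;> ring)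
    | (norm_num; match_scalars <;> ring)

lemma curve_d3 (n' : ℕ) (p : ℕ → E) :
    iteratedDeriv 3 (fun t : ℝ => ∑ i ∈ Finset.range (n'+4), bern (n'+3) i t • p i) 1
      = (((n':ℝ)+3) * ((n':ℝ)+2) * ((n':ℝ)+1)) • fdiff p 3 n' := by
  have h := curve_tail 3 (by norm_num) n' p
  rw [h, bp0, bp1, bp2, bp3]
  rcases n' with _ | _ | a <;>
  · simp only [it3, derivative_mul, derivative_pow, derivative_sub,
      derivative_add, derivative_C, derivative_X_pow, derivative_X, derivative_one,
      derivative_ofNat, derivative_zero, derivative_natCast, eval_mul, eval_sub, eval_add,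
      eval_C, eval_pow, eval_X, eval_one,
      eval_natCast, eval_ofNat, eval_zero, one_pow, mul_one, mul_zero, zero_mul,
      Nat.zero_sub, Nat.add_sub_cancel, fdiff]
    first
    | (simp only [show ∀ a : ℕ, a+1+1-1 = a+1 from fun a => rfl, show ∀ a : ℕ, a+1-1 = a from fun a => rfl]
       push_cast
       match_scalars <;> ring)
    | (norm_num; match_scalars <;> ring)

set_option maxHeartbeats 4000000 in
theorem stmt14 (d n m : ℕ) (hn : 3 ≤ n) (hm : 3 ≤ m)
    (p r : ℕ → EuclideanSpace ℝ (Fin d)) (mu1 mu2 mu3 : ℝ)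
    (P R : ℝ → EuclideanSpace ℝ (Fin d))
    (hP : P = fun t : ℝ => ∑ i ∈ Finset.range (n + 1), bern n i t • p i)
    (hR : R = fun t : ℝ => ∑ i ∈ Finset.range (m + 1), bern m i t • r i)
    -- the G³ conditions at t = 1
    (h0 : R 1 = P 1)
    (h1 : deriv R 1 = mu1 • deriv P 1)
    (h2 : iteratedDeriv 2 R 1 = mu1 ^ 2 • iteratedDeriv 2 P 1 + mu2 • deriv P 1)
    (h3 : iteratedDeriv 3 R 1 = mu1 ^ 3 • iteratedDeriv 3 P 1 +
      (3 * mu1 * mu2) • iteratedDeriv 2 P 1 + mu3 • deriv P 1) :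
    r m = p n ∧
    r (m - 1) = p n - ((n : ℝ) / (m : ℝ) * mu1) • fdiff p 1 (n - 1) ∧
    r (m - 2) = p n -
        ((n : ℝ) / (m : ℝ) * (2 * mu1 - mu2 / ((m : ℝ) - 1))) • fdiff p 1 (n - 1) +
        (poch ((n : ℝ) - 1) 2 / poch ((m : ℝ) - 1) 2 * mu1 ^ 2) • fdiff p 2 (n - 2) ∧
    r (m - 3) = p n -
        ((n : ℝ) / (m : ℝ) *
          (3 * mu1 - 3 * mu2 / ((m : ℝ) - 1) + mu3 / poch ((m : ℝ) - 2) 2)) • fdiff p 1 (n - 1) +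
        (3 * (poch ((n : ℝ) - 1) 2 / poch ((m : ℝ) - 1) 2) *
          (mu1 ^ 2 - mu1 * mu2 / ((m : ℝ) - 2))) • fdiff p 2 (n - 2) -
        (poch ((n : ℝ) - 2) 3 / poch ((m : ℝ) - 2) 3 * mu1 ^ 3) • fdiff p 3 (n - 3) := by
  obtain ⟨n', rfl⟩ : ∃ k, n = k + 3 := ⟨n - 3, by omega⟩
  obtain ⟨m', rfl⟩ : ∃ k, m = k + 3 := ⟨m - 3, by omega⟩
  subst hP hR
  -- rewrite hypotheses via derivative lemmas
  simp only [show n'+3+1 = n'+4 from rfl, show m'+3+1 = m'+4 from rfl] at h0 h1 h2 h3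
  have hd0P := curve_d0 n' p
  have hd0R := curve_d0 m' r
  rw [hd0R, hd0P] at h0
  rw [curve_d1 m' r, curve_d1 n' p] at h1
  rw [curve_d2 m' r, curve_d2 n' p, curve_d1 n' p] at h2
  rw [curve_d3 m' r, curve_d3 n' p, curve_d2 n' p, curve_d1 n' p] at h3
  simp only [fdiff] at h1 h2 h3
  simp only [show m'+2+1 = m'+3 by omega, show m'+1+1 = m'+2 by omega, show m'+2+1 = m'+3 by omega,
    show n'+2+1 = n'+3 by omega, show n'+1+1 = n'+2 by omega] at h1 h2 h3
  -- nonzeroness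
  have hM0 : ((m':ℝ) + 3) ≠ 0 := by positivity
  have hM20 : (((m':ℝ) + 3) * ((m':ℝ) + 2)) ≠ 0 := by positivity
  have hM30 : (((m':ℝ) + 3) * ((m':ℝ) + 2) * ((m':ℝ) + 1)) ≠ 0 := by positivity
  have hq1 : ((m':ℝ) + 3 - 1) ≠ 0 := by intro h; nlinarith [Nat.cast_nonneg (α := ℝ) m']
  have hq2 : ((m':ℝ) + 3 - 2) ≠ 0 := by intro h; nlinarith [Nat.cast_nonneg (α := ℝ) m']
  have hq3 : ((m':ℝ) + 2) ≠ 0 := by positivity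
  have hq4 : ((m':ℝ) + 1) ≠ 0 := by positivity
  have hx2 : (6 + (m':ℝ) * 5 + (m':ℝ) ^ 2) ≠ 0 := by positivity
  have hx3 : (6 + (m':ℝ) * 11 + (m':ℝ) ^ 2 * 6 + (m':ℝ) ^ 3) ≠ 0 := by positivity
  have E1 : r (m'+2) = r (m'+3)
      - (((m':ℝ)+3))⁻¹ • (mu1 • ((n':ℝ) + 3) • (p (n' + 3) - p (n' + 2))) := by
    rw [← h1, inv_smul_smul₀ hM0]; abel
  have E2 : r (m'+1) = (((m':ℝ)+3)*((m':ℝ)+2))⁻¹ •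
        (mu1 ^ 2 • (((n':ℝ) + 3) * ((n':ℝ) + 2)) • (p (n' + 3) - p (n' + 2) - (p (n' + 2) - p (n' + 1))) +
          mu2 • ((n':ℝ) + 3) • (p (n' + 3) - p (n' + 2)))
      - r (m'+3) + r (m'+2) + r (m'+2) := by
    rw [← h2, inv_smul_smul₀ hM20]; abel
  have E3 : r m' = -((((m':ℝ)+3)*((m':ℝ)+2)*((m':ℝ)+1))⁻¹ •
        (mu1 ^ 3 • (((n':ℝ) + 3) * ((n':ℝ) + 2) * ((n':ℝ) + 1)) •
            (p (n' + 3) - p (n' + 2) - (p (n' + 2) - p (n' + 1)) -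
              (p (n' + 2) - p (n' + 1) - (p (n' + 1) - p n'))) +
          (3 * mu1 * mu2) •
            (((n':ℝ) + 3) * ((n':ℝ) + 2)) • (p (n' + 3) - p (n' + 2) - (p (n' + 2) - p (n' + 1))) +
          mu3 • ((n':ℝ) + 3) • (p (n' + 3) - p (n' + 2))))
      + r (m'+3) - r (m'+2) - r (m'+2) - r (m'+2) + r (m'+1) + r (m'+1) + r (m'+1) := by
    rw [← h3, inv_smul_smul₀ hM30]; abel
  simp only [show m'+3-1 = m'+2 by omega, show m'+3-2 = m'+1 by omega, show m'+3-3 = m' by omega,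
    show n'+3-1 = n'+2 by omega, show n'+3-2 = n'+1 by omega, show n'+3-3 = n' by omega,
    fdiff, poch2, poch3]
  push_cast
  simp only [show ((m':ℝ)+3-1) = (m':ℝ)+2 by ring, show ((m':ℝ)+3-2) = (m':ℝ)+1 by ring,
    show ((n':ℝ)+3-1) = (n':ℝ)+2 by ring, show ((n':ℝ)+3-2) = (n':ℝ)+1 by ring,
    show ((m':ℝ)+2+1) = (m':ℝ)+3 by ring, show ((m':ℝ)+1+1) = (m':ℝ)+2 by ring,
    show ((m':ℝ)+1+2) = (m':ℝ)+3 by ring, show ((n':ℝ)+2+1) = (n':ℝ)+3 by ring,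
    show ((n':ℝ)+1+1) = (n':ℝ)+2 by ring, show ((n':ℝ)+1+2) = (n':ℝ)+3 by ring]
  refine ⟨h0, ?_, ?_, ?_⟩
  · rw [E1, h0]
    clear h1 h2 h3 E1 E2 E3 hd0P hd0R h0
    match_scalars <;> (field_simp <;> ring)
  · rw [E2, E1, h0]
    clear h1 h2 h3 E1 E2 E3 hd0P hd0R h0
    match_scalars <;> (field_simp <;> ring)
  · rw [E3, E2, E1, h0]
    clear h1 h2 h3 E1 E2 E3 hd0P hd0R h0
    match_scalars <;> (field_simp <;> ring)
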